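/- For every n ≥ 1, all positive integers k_1, …, k_n, and each of the three sides S of the triangle Δ (the segments joining (0,0), (1,0) and (0,1) pairwise), the image H_{k_1}∘H_{k_2}∘⋯∘H_{k_n}(S) is the line segment joining the images (x₁,y₁) and (x₂,y₂) of the two endpoints of S; moreover these images satisfy y₁ ≠ y₂ and (x₂−x₁)(y₂−y₁) ≤ 0, i.e., every side of the triangle H_{k_1}∘⋯∘H_{k_n}(Δ) is a nondegenerate segment that is vertical or lies on a line of negative slope. -/

import Mathlib

/-- The unit simplex `Δ = {(u,v) : u ≥ 0, v ≥ 0, u+v ≤ 1}`. -/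
def Delta : Set (ℝ × ℝ) := {p | 0 ≤ p.1 ∧ 0 ≤ p.2 ∧ p.1 + p.2 ≤ 1}

/-- The map `H_k(u,v) = (v, 1-v)/D_k` where `D_k = k(1-v) + 1 - u`. -/
noncomputable def Hmap (k : ℕ) (p : ℝ × ℝ) : ℝ × ℝ :=
  (p.2 / ((k : ℝ) * (1 - p.2) + 1 - p.1), (1 - p.2) / ((k : ℝ) * (1 - p.2) + 1 - p.1))

/-- `Hcomp k n = H_{k 1} ∘ H_{k 2} ∘ ⋯ ∘ H_{k n}`. -/
noncomputable def Hcomp (k : ℕ → ℕ) : ℕ → (ℝ × ℝ) → (ℝ × ℝ)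
  | 0 => id
  | n + 1 => Hcomp k n ∘ Hmap (k (n + 1))

namespace S9

def Dk (k : ℕ) (p : ℝ × ℝ) : ℝ := (k : ℝ) * (1 - p.2) + 1 - p.1

def GoodLine (α β γ : ℝ) : Prop := 0 ≤ γ ∧ γ ≤ α ∧ γ ≤ β ∧ 0 < α + β - γ

lemma Hmap_eq (k : ℕ) (p : ℝ × ℝ) : Hmap k p = (p.2 / Dk k p, (1 - p.2) / Dk k p) := rfl

lemma Dk_ge_one {k : ℕ} (hk : 1 ≤ k) {p : ℝ × ℝ} (hp : p ∈ Delta) : (1:ℝ) ≤ Dk k p := by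
  obtain ⟨h1, h2, h3⟩ := hp
  have hk' : (1:ℝ) ≤ (k:ℝ) := by exact_mod_cast hk
  have hv : p.2 ≤ 1 := by linarith
  have : (1 - p.2) ≤ (k:ℝ) * (1 - p.2) := le_mul_of_one_le_left (by linarith) hk'
  unfold Dk; linarith

lemma Dk_pos {k : ℕ} (hk : 1 ≤ k) {p : ℝ × ℝ} (hp : p ∈ Delta) : (0:ℝ) < Dk k p :=
  lt_of_lt_of_le one_pos (Dk_ge_one hk hp) |>.trans_le (le_refl _)

lemma Hmap_mem {k : ℕ} (hk : 1 ≤ k) {p : ℝ × ℝ} (hp : p ∈ Delta) : Hmap k p ∈ Delta := by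
  have hD := Dk_ge_one hk hp
  have hD0 : (0:ℝ) < Dk k p := by linarith
  obtain ⟨h1, h2, h3⟩ := hp
  have hv : p.2 ≤ 1 := by linarith
  rw [Hmap_eq]
  refine ⟨div_nonneg h2 hD0.le, div_nonneg (by linarith) hD0.le, ?_⟩
  rw [← add_div]
  rw [div_le_one hD0]
  linarith

lemma Hmap_inj {k : ℕ} (hk : 1 ≤ k) {p q : ℝ × ℝ} (hp : p ∈ Delta) (hq : q ∈ Delta)
    (h : Hmap k p = Hmap k q) : p = q := by
  have hDp : Dk k p ≠ 0 := (Dk_pos hk hp).ne'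
  have hDq : Dk k q ≠ 0 := (Dk_pos hk hq).ne'
  rw [Hmap_eq, Hmap_eq, Prod.mk.injEq] at h
  obtain ⟨h1, h2⟩ := h
  have hsum : 1 / Dk k p = 1 / Dk k q := by
    have := congrArg₂ (· + ·) h1 h2
    simp only [← add_div] at this
    convert this using 2 <;> ring
  have hD : Dk k p = Dk k q := by
    field_simp at hsum; linarith
  rw [hD] at h1
  have hv : p.2 = q.2 := by field_simp at h1; exact h1
  have hu : p.1 = q.1 := by
    unfold Dk at hD; rw [hv] at hD; linarith
  exact Prod.ext hu hv

lemma line_step (k : ℕ) {α β γ : ℝ} {p : ℝ × ℝ} (hD : Dk k p ≠ 0)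
    (h : α * p.1 + β * p.2 = γ) :
    (α + β - γ) * (Hmap k p).1 + ((k + 1) * α - γ) * (Hmap k p).2 = α := by
  rw [Hmap_eq]
  simp only
  field_simp
  unfold Dk
  ring_nf
  unfold Dk at hD
  linear_combination h

lemma good_step (k : ℕ) (hk : 1 ≤ k) {α β γ : ℝ} (h : GoodLine α β γ) :
    GoodLine (α + β - γ) ((k + 1) * α - γ) α ∧ 0 < α + β - γ := by
  obtain ⟨h0, h1, h2, h3⟩ := h
  have hk' : (1:ℝ) ≤ (k:ℝ) := by exact_mod_cast hk
  have ha : 0 ≤ α := le_trans h0 h1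
  have hka : α ≤ (k:ℝ) * α := le_mul_of_one_le_left ha hk'
  refine ⟨⟨ha, by linarith, by linarith, by nlinarith⟩, h3⟩

lemma E_pos {k : ℕ} (hk : 1 ≤ k) {p q : ℝ × ℝ} (hp : p ∈ Delta) (hq : q ∈ Delta)
    {t : ℝ} (ht0 : 0 ≤ t) (ht1 : t ≤ 1) :
    (0:ℝ) < (1 - t) * Dk k p + t * Dk k q := by
  have h1 := Dk_ge_one hk hp
  have h2 := Dk_ge_one hk hq
  nlinarith [mul_le_mul_of_nonneg_left h1 (by linarith : (0:ℝ) ≤ 1 - t),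
    mul_le_mul_of_nonneg_left h2 ht0]

lemma comb_step {k : ℕ} (hk : 1 ≤ k) {p q : ℝ × ℝ} (hp : p ∈ Delta) (hq : q ∈ Delta)
    {t : ℝ} (ht0 : 0 ≤ t) (ht1 : t ≤ 1) :
    Hmap k ((1 - t) • p + t • q) =
      (1 - t * Dk k q / ((1 - t) * Dk k p + t * Dk k q)) • Hmap k p +
        (t * Dk k q / ((1 - t) * Dk k p + t * Dk k q)) • Hmap k q := by
  have hDp : (0:ℝ) < Dk k p := lt_of_lt_of_le one_pos (Dk_ge_one hk hp)
  have hDq : (0:ℝ) < Dk k q := lt_of_lt_of_le one_pos (Dk_ge_one hk hq)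
  have hE : (0:ℝ) < (1 - t) * Dk k p + t * Dk k q := E_pos hk hp hq ht0 ht1
  have hr2 : ((1 - t) • p + t • q).2 = (1 - t) * p.2 + t * q.2 := by
    simp [Prod.snd_add, Prod.smul_snd, smul_eq_mul]
  have hr1 : ((1 - t) • p + t • q).1 = (1 - t) * p.1 + t * q.1 := by
    simp [Prod.fst_add, Prod.smul_fst, smul_eq_mul]
  have hDr : Dk k ((1 - t) • p + t • q) = (1 - t) * Dk k p + t * Dk k q := by
    unfold Dk; rw [hr1, hr2]; ring
  rw [Hmap_eq, Hmap_eq, Hmap_eq, hDr, hr2]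
  apply Prod.ext
  · simp only [Prod.fst_add, Prod.smul_fst, smul_eq_mul]
    field_simp
    ring
  · simp only [Prod.snd_add, Prod.smul_snd, smul_eq_mul]
    field_simp
    ring

lemma seg_step {k : ℕ} (hk : 1 ≤ k) {p q : ℝ × ℝ} (hp : p ∈ Delta) (hq : q ∈ Delta) :
    Hmap k '' segment ℝ p q = segment ℝ (Hmap k p) (Hmap k q) := by
  have hDp : (0:ℝ) < Dk k p := lt_of_lt_of_le one_pos (Dk_ge_one hk hp)
  have hDq : (0:ℝ) < Dk k q := lt_of_lt_of_le one_pos (Dk_ge_one hk hq)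
  rw [segment_eq_image, segment_eq_image, ← Set.image_comp]
  ext z
  simp only [Set.mem_image, Function.comp_apply, Set.mem_Icc]
  constructor
  · rintro ⟨t, ⟨ht0, ht1⟩, rfl⟩
    refine ⟨t * Dk k q / ((1 - t) * Dk k p + t * Dk k q), ⟨?_, ?_⟩, ?_⟩
    · have hE : (0:ℝ) < (1 - t) * Dk k p + t * Dk k q := E_pos hk hp hq ht0 ht1
      positivity
    · have hE : (0:ℝ) < (1 - t) * Dk k p + t * Dk k q := E_pos hk hp hq ht0 ht1
      rw [div_le_one hE]; nlinarith
    · exact (comb_step hk hp hq ht0 ht1).symm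
  · rintro ⟨s, ⟨hs0, hs1⟩, rfl⟩
    have hF : (0:ℝ) < s * Dk k p + (1 - s) * Dk k q := by
      have h1 := Dk_ge_one hk hp
      have h2 := Dk_ge_one hk hq
      nlinarith [mul_le_mul_of_nonneg_left h1 hs0,
        mul_le_mul_of_nonneg_left h2 (by linarith : (0:ℝ) ≤ 1 - s)]
    set t := s * Dk k p / (s * Dk k p + (1 - s) * Dk k q) with hdeft
    have ht0 : 0 ≤ t := by positivity
    have ht1 : t ≤ 1 := by rw [hdeft, div_le_one hF]; nlinarith
    refine ⟨t, ⟨ht0, ht1⟩, ?_⟩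
    rw [comb_step hk hp hq ht0 ht1]
    have hs : t * Dk k q / ((1 - t) * Dk k p + t * Dk k q) = s := by
      rw [hdeft]
      rw [div_eq_iff]
      · field_simp
        ring
      · have hE' : (1 - t) * Dk k p + t * Dk k q = Dk k p * Dk k q / (s * Dk k p + (1 - s) * Dk k q) := by
          rw [hdeft]; field_simp; ring
        rw [← hdeft, hE']
        positivity
    rw [hs]

lemma slope_final {α β γ : ℝ} (ha : 0 < α) (hb : 0 ≤ β) {z w : ℝ × ℝ}
    (hz : α * z.1 + β * z.2 = γ) (hw : α * w.1 + β * w.2 = γ) (hne : z ≠ w) :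
    w.2 ≠ z.2 ∧ (w.1 - z.1) * (w.2 - z.2) ≤ 0 := by
  constructor
  · intro h
    apply hne
    have : α * z.1 = α * w.1 := by rw [h] at hw; linarith
    have hx : z.1 = w.1 := mul_left_cancel₀ ha.ne' this
    exact Prod.ext hx h.symm
  · have key : α * ((w.1 - z.1) * (w.2 - z.2)) = -β * (w.2 - z.2) ^ 2 := by
      have : α * (w.1 - z.1) = -β * (w.2 - z.2) := by linarith
      linear_combination (w.2 - z.2) * this
    nlinarith [sq_nonneg (w.2 - z.2), mul_nonneg hb (sq_nonneg (w.2 - z.2))]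

/-- One full step of the induction. -/
lemma step {k : ℕ} (hk : 1 ≤ k) {p q : ℝ × ℝ} {α β γ : ℝ}
    (hp : p ∈ Delta) (hq : q ∈ Delta) (hne : p ≠ q)
    (hlp : α * p.1 + β * p.2 = γ) (hlq : α * q.1 + β * q.2 = γ)
    (hG : GoodLine α β γ) :
    Hmap k p ∈ Delta ∧ Hmap k q ∈ Delta ∧ Hmap k p ≠ Hmap k q ∧
      (α + β - γ) * (Hmap k p).1 + (((k:ℝ) + 1) * α - γ) * (Hmap k p).2 = α ∧
      (α + β - γ) * (Hmap k q).1 + (((k:ℝ) + 1) * α - γ) * (Hmap k q).2 = α ∧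
      GoodLine (α + β - γ) (((k:ℝ) + 1) * α - γ) α ∧ 0 < α + β - γ ∧
      Hmap k '' segment ℝ p q = segment ℝ (Hmap k p) (Hmap k q) := by
  obtain ⟨hG', hpos'⟩ := good_step k hk hG
  exact ⟨Hmap_mem hk hp, Hmap_mem hk hq,
    fun h => hne (Hmap_inj hk hp hq h),
    line_step k (Dk_pos hk hp).ne' hlp, line_step k (Dk_pos hk hq).ne' hlq,
    hG', hpos', seg_step hk hp hq⟩

/-- Main induction. -/
lemma main (k : ℕ → ℕ) (hpos : ∀ i, 1 ≤ i → 1 ≤ k i) :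
    ∀ (n : ℕ) (p q : ℝ × ℝ) (α β γ : ℝ), p ∈ Delta → q ∈ Delta → p ≠ q →
      α * p.1 + β * p.2 = γ → α * q.1 + β * q.2 = γ → GoodLine α β γ → 0 < α →
      ∃ α' β' γ', GoodLine α' β' γ' ∧ 0 < α' ∧
        Hcomp k n p ≠ Hcomp k n q ∧
        α' * (Hcomp k n p).1 + β' * (Hcomp k n p).2 = γ' ∧
        α' * (Hcomp k n q).1 + β' * (Hcomp k n q).2 = γ' ∧
        Hcomp k n '' segment ℝ p q = segment ℝ (Hcomp k n p) (Hcomp k n q) := by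
  intro n
  induction n with
  | zero =>
    intro p q α β γ hp hq hne hlp hlq hG ha
    exact ⟨α, β, γ, hG, ha, hne, hlp, hlq, by simp [Hcomp]⟩
  | succ n ih =>
    intro p q α β γ hp hq hne hlp hlq hG ha
    have hk : 1 ≤ k (n + 1) := hpos (n + 1) (by omega)
    obtain ⟨hp', hq', hne', hlp', hlq', hG', ha', hseg'⟩ := step hk hp hq hne hlp hlq hG
    obtain ⟨α', β', γ', h1, h2, h3, h4, h5, h6⟩ :=
      ih (Hmap (k (n + 1)) p) (Hmap (k (n + 1)) q) _ _ _ hp' hq' hne' hlp' hlq' hG' ha'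
    refine ⟨α', β', γ', h1, h2, ?_, ?_, ?_, ?_⟩
    · simpa [Hcomp] using h3
    · simpa [Hcomp] using h4
    · simpa [Hcomp] using h5
    · show (Hcomp k n ∘ Hmap (k (n + 1))) '' segment ℝ p q = _
      rw [Set.image_comp, hseg', h6]
      rfl

end S9

/-- for every `n ≥ 1`, positive integers `k_1, …, k_n` and each side `S`
of the triangle `Δ` (segment joining two of the vertices `(0,0)`, `(1,0)`, `(0,1)`),
the image `H_{k_1} ∘ ⋯ ∘ H_{k_n}(S)` is the segment joining the images of the two
endpoints; these images `(x₁,y₁)`, `(x₂,y₂)` satisfy `y₁ ≠ y₂` and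
`(x₂−x₁)(y₂−y₁) ≤ 0`: every side of `H_{k_1} ∘ ⋯ ∘ H_{k_n}(Δ)` is a nondegenerate
segment, vertical or of negative slope. -/
theorem statement9 (n : ℕ) (hn : 1 ≤ n) (k : ℕ → ℕ) (hpos : ∀ i, 1 ≤ i → 1 ≤ k i)
    (p q : ℝ × ℝ)
    (hp : p ∈ ({(0, 0), (1, 0), (0, 1)} : Set (ℝ × ℝ)))
    (hq : q ∈ ({(0, 0), (1, 0), (0, 1)} : Set (ℝ × ℝ))) (hpq : p ≠ q) :
    Hcomp k n '' segment ℝ p q = segment ℝ (Hcomp k n p) (Hcomp k n q) ∧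
    (Hcomp k n q).2 ≠ (Hcomp k n p).2 ∧
    ((Hcomp k n q).1 - (Hcomp k n p).1) * ((Hcomp k n q).2 - (Hcomp k n p).2) ≤ 0 := by
  obtain ⟨m, rfl⟩ : ∃ m, n = m + 1 := ⟨n - 1, (Nat.succ_pred_eq_of_pos hn).symm⟩
  -- membership in Delta
  have hmem : ∀ r : ℝ × ℝ, r ∈ ({(0, 0), (1, 0), (0, 1)} : Set (ℝ × ℝ)) → r ∈ Delta := by
    intro r hr
    rcases hr with rfl | rfl | rfl <;> norm_num [Delta]
  -- find a good line through p and q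
  obtain ⟨α, β, γ, hlp, hlq, hG⟩ :
      ∃ α β γ : ℝ, α * p.1 + β * p.2 = γ ∧ α * q.1 + β * q.2 = γ ∧ S9.GoodLine α β γ := by
    rcases hp with rfl | rfl | rfl <;> rcases hq with rfl | rfl | rfl
    · exact absurd rfl hpq
    · exact ⟨0, 1, 0, by norm_num, by norm_num, by norm_num [S9.GoodLine]⟩
    · exact ⟨1, 0, 0, by norm_num, by norm_num, by norm_num [S9.GoodLine]⟩
    · exact ⟨0, 1, 0, by norm_num, by norm_num, by norm_num [S9.GoodLine]⟩
    · exact absurd rfl hpq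
    · exact ⟨1, 1, 1, by norm_num, by norm_num, by norm_num [S9.GoodLine]⟩
    · exact ⟨1, 0, 0, by norm_num, by norm_num, by norm_num [S9.GoodLine]⟩
    · exact ⟨1, 1, 1, by norm_num, by norm_num, by norm_num [S9.GoodLine]⟩
    · exact absurd rfl hpq
  have hpD := hmem p hp
  have hqD := hmem q hq
  have hk : 1 ≤ k (m + 1) := hpos (m + 1) (by omega)
  obtain ⟨hp', hq', hne', hlp', hlq', hG', ha', hseg'⟩ :=
    S9.step hk hpD hqD hpq hlp hlq hG
  obtain ⟨α', β', γ', h1, h2, h3, h4, h5, h6⟩ :=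
    S9.main k hpos m (Hmap (k (m + 1)) p) (Hmap (k (m + 1)) q) _ _ _ hp' hq' hne' hlp' hlq' hG' ha'
  have hb' : 0 ≤ β' := le_trans h1.1 h1.2.2.1
  have hc1 : Hcomp k (m + 1) p = Hcomp k m (Hmap (k (m + 1)) p) := rfl
  have hc2 : Hcomp k (m + 1) q = Hcomp k m (Hmap (k (m + 1)) q) := rfl
  obtain ⟨hy, hs⟩ := S9.slope_final h2 hb' h4 h5 h3
  refine ⟨?_, by rw [hc1, hc2]; exact hy, by rw [hc1, hc2]; exact hs⟩
  show (Hcomp k m ∘ Hmap (k (m + 1))) '' segment ℝ p q = _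
  rw [Set.image_comp, hseg', h6, hc1, hc2]
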